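/- Let (Ω, F, μ) be a probability space, let n be a positive integer, let y ∈ [0,1]^n, and let x : Ω → {0,1}^n be a random vector with E[x_j] = y_j for each j and such that for every subset S ⊆ {1,…,n}, E[ Π_{j∈S} (1 − x_j) ] ≤ Π_{j∈S} (1 − y_j). Let C be a finite index set and let Δ ≥ 1 be an integer; for each ℓ ∈ C let c_ℓ ≥ 0, b_ℓ > 0, let S_ℓ ⊆ {1,…,n} be nonempty with |S_ℓ| ≤ Δ, and let w_{ℓ,j} ∈ [0, b_ℓ] for j ∈ S_ℓ. Then E[ Σ_{ℓ∈C} c_ℓ · min{ b_ℓ , Σ_{j∈S_ℓ} w_{ℓ,j}·x_j } ] ≥ (1 − (1 − 1/Δ)^Δ) · Σ_{ℓ∈C} c_ℓ · min{ b_ℓ , Σ_{j∈S_ℓ} w_{ℓ,j}·y_j }. -/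

import Mathlib

open MeasureTheory

open Finset in

/-- product of numbers in [0,1] is in [0,1] -/
lemma prod_Icc01 {ι : Type*} (s : Finset ι) (f : ι → ℝ) (hf : ∀ i ∈ s, f i ∈ Set.Icc (0:ℝ) 1) :
    ∏ i ∈ s, f i ∈ Set.Icc (0:ℝ) 1 :=
  ⟨Finset.prod_nonneg fun i hi => (hf i hi).1,
   Finset.prod_le_one (fun i hi => (hf i hi).1) (fun i hi => (hf i hi).2)⟩

/-- 1 - ∏(1-t) ≤ ∑ t for t ∈ [0,1] -/
lemma one_sub_prod_le_sum {ι : Type*} [DecidableEq ι] (s : Finset ι) (t : ι → ℝ)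
    (ht : ∀ i ∈ s, t i ∈ Set.Icc (0:ℝ) 1) :
    1 - ∏ i ∈ s, (1 - t i) ≤ ∑ i ∈ s, t i := by
  induction s using Finset.induction_on with
  | empty => simp
  | @insert a s ha ih =>
    rw [Finset.prod_insert ha, Finset.sum_insert ha]
    have ht' : ∀ i ∈ s, t i ∈ Set.Icc (0:ℝ) 1 := fun i hi => ht i (Finset.mem_insert_of_mem hi)
    have hP := prod_Icc01 s (fun i => 1 - t i) (fun i hi => ⟨by linarith [(ht' i hi).2], by linarith [(ht' i hi).1]⟩)
    have hta := ht a (Finset.mem_insert_self a s)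
    have := ih ht'
    nlinarith [hta.1, hta.2, hP.1, hP.2]

/-- AM-GM padded: ∏ g ≤ ((Δ - card + ∑ g)/Δ)^Δ for g ∈ [0,1], card ≤ Δ -/
lemma amgm_padded {ι : Type*} [DecidableEq ι] (s : Finset ι) (g : ι → ℝ)
    (hg : ∀ i ∈ s, g i ∈ Set.Icc (0:ℝ) 1) (Δ : ℕ) (hΔ : 1 ≤ Δ) (hcard : s.card ≤ Δ) :
    ∏ i ∈ s, g i ≤ (((Δ:ℝ) - s.card + ∑ i ∈ s, g i) / Δ) ^ Δ := by
  have hΔ0 : (0:ℝ) < Δ := by exact_mod_cast hΔ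
  set s' : Finset (Option ι) := insert none (s.map Function.Embedding.some) with hs'
  have hnone : none ∉ s.map Function.Embedding.some := by simp
  set wt : Option ι → ℝ := fun o => o.elim (1 - s.card / Δ) (fun _ => 1 / Δ) with hwt
  set z : Option ι → ℝ := fun o => o.elim 1 g with hz
  have hw0 : ∀ o ∈ s', 0 ≤ wt o := by
    intro o _
    match o with
    | none =>
      simp only [hwt, Option.elim]
      have : (s.card : ℝ) ≤ Δ := by exact_mod_cast hcard
      have := div_le_one_of_le₀ this hΔ0.le
      linarith
    | some i => simp only [hwt, Option.elim]; positivity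
  have hwsum : ∑ o ∈ s', wt o = 1 := by
    rw [Finset.sum_insert hnone, Finset.sum_map]
    simp only [hwt, Function.Embedding.some_apply, Option.elim]
    rw [Finset.sum_const, nsmul_eq_mul]
    field_simp
    ring
  have hz0 : ∀ o ∈ s', 0 ≤ z o := by
    intro o ho
    match o with
    | none => simp [hz]
    | some i =>
      simp only [hz, Option.elim]
      have : i ∈ s := by
        rcases Finset.mem_insert.1 ho with h | h
        · exact absurd h (by simp)
        · simpa using h
      exact (hg i this).1
  have key := Real.geom_mean_le_arith_mean_weighted s' wt z hw0 hwsum hz0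
  have hL : ∏ o ∈ s', z o ^ wt o = (∏ i ∈ s, g i) ^ ((1:ℝ)/Δ) := by
    rw [Finset.prod_insert hnone, Finset.prod_map]
    simp only [hwt, hz, Function.Embedding.some_apply, Option.elim]
    rw [Real.one_rpow, one_mul, Real.finset_prod_rpow s g (fun i hi => (hg i hi).1)]
  have hR : ∑ o ∈ s', wt o * z o = ((Δ:ℝ) - s.card + ∑ i ∈ s, g i) / Δ := by
    rw [Finset.sum_insert hnone, Finset.sum_map]
    simp only [hwt, hz, Function.Embedding.some_apply, Option.elim, mul_one]
    rw [← Finset.mul_sum]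
    field_simp
  rw [hL, hR] at key
  have hP0 : 0 ≤ ∏ i ∈ s, g i := Finset.prod_nonneg fun i hi => (hg i hi).1
  calc ∏ i ∈ s, g i = ((∏ i ∈ s, g i) ^ ((1:ℝ)/Δ)) ^ Δ := by
        rw [← Real.rpow_natCast ((∏ i ∈ s, g i) ^ ((1:ℝ)/Δ)) Δ, ← Real.rpow_mul hP0]
        rw [one_div, inv_mul_cancel₀ (ne_of_gt hΔ0), Real.rpow_one]
    _ ≤ (((Δ:ℝ) - s.card + ∑ i ∈ s, g i) / Δ) ^ Δ :=
        pow_le_pow_left₀ (Real.rpow_nonneg hP0 _) key Δ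

/-- scalar inequality -/
lemma scalar_ineq (Δ : ℕ) (hΔ : 1 ≤ Δ) (T : ℝ) (hT0 : 0 ≤ T) (hTΔ : T ≤ Δ) :
    (1 - (1 - 1 / (Δ:ℝ)) ^ Δ) * min 1 T ≤ 1 - (1 - T / Δ) ^ Δ := by
  have hΔ0 : (0:ℝ) < Δ := by exact_mod_cast hΔ
  have hΔ1 : (1:ℝ) ≤ Δ := by exact_mod_cast hΔ
  have h1Δ : (0:ℝ) ≤ 1 - 1/Δ := by
    rw [sub_nonneg, div_le_one hΔ0]; exact hΔ1
  rcases le_total 1 T with h | h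
  · rw [min_eq_left h]
    have h1 : (0:ℝ) ≤ 1 - T/Δ := by
      rw [sub_nonneg, div_le_one hΔ0]; exact hTΔ
    have h2 : 1 - T/Δ ≤ 1 - 1/Δ := by
      have : 1/(Δ:ℝ) ≤ T/Δ := by gcongr
      linarith
    have := pow_le_pow_left₀ h1 h2 Δ
    linarith
  · rw [min_eq_right h]
    have hmem1 : (1:ℝ) ∈ Set.Ici (0:ℝ) := Set.mem_Ici.2 zero_le_one
    have hmem2 : (1 - 1/(Δ:ℝ)) ∈ Set.Ici (0:ℝ) := Set.mem_Ici.2 h1Δ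
    have hcvx := (convexOn_pow Δ).2 hmem1 hmem2 (by linarith : (0:ℝ) ≤ 1 - T) hT0
        (by ring : (1 - T) + T = 1)
    simp only [smul_eq_mul] at hcvx
    have heq : (1 - T) * 1 + T * (1 - 1/(Δ:ℝ)) = 1 - T/Δ := by field_simp; ring
    rw [heq, one_pow] at hcvx
    nlinarith [hcvx]


lemma key_analytic {ι : Type*} [DecidableEq ι] (s : Finset ι) (t : ι → ℝ)
    (ht : ∀ i ∈ s, t i ∈ Set.Icc (0:ℝ) 1) (Δ : ℕ) (hΔ : 1 ≤ Δ) (hcard : s.card ≤ Δ) :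
    (1 - (1 - 1/(Δ:ℝ))^Δ) * min 1 (∑ i ∈ s, t i) ≤ 1 - ∏ i ∈ s, (1 - t i) := by
  have hΔ0 : (0:ℝ) < Δ := by exact_mod_cast hΔ
  set T := ∑ i ∈ s, t i with hT
  have hT0 : 0 ≤ T := Finset.sum_nonneg fun i hi => (ht i hi).1
  have hTm : T ≤ s.card := by
    calc T ≤ ∑ i ∈ s, (1:ℝ) := Finset.sum_le_sum fun i hi => (ht i hi).2
      _ = s.card := by simp
  have hTΔ : T ≤ Δ := hTm.trans (by exact_mod_cast hcard)
  have hgt : ∀ i ∈ s, (1 - t i) ∈ Set.Icc (0:ℝ) 1 := fun i hi =>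
    ⟨by linarith [(ht i hi).2], by linarith [(ht i hi).1]⟩
  have hamgm := amgm_padded s (fun i => 1 - t i) hgt Δ hΔ hcard
  have hsum : ∑ i ∈ s, (1 - t i) = (s.card : ℝ) - T := by
    rw [Finset.sum_sub_distrib]; simp; exact hT.symm
  rw [hsum] at hamgm
  have heq : ((Δ:ℝ) - s.card + ((s.card:ℝ) - T)) / Δ = 1 - T/Δ := by
    field_simp
    ring
  rw [heq] at hamgm
  have := scalar_ineq Δ hΔ T hT0 hTΔ
  linarith

/-- Sandwich property for weighted threshold potential functions (Lemma 3 of the paper):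
for a negatively correlated unbiased randomized rounding `x` of `y`,
`E[f(x)] ≥ (1 - (1 - 1/Δ)^Δ) * f̃(y)` where `Δ` bounds the degree of the WTP function. -/
theorem wtp_sandwich
    (Ω : Type*) [MeasurableSpace Ω] (μ : Measure Ω) [IsProbabilityMeasure μ]
    (n : ℕ) (hn : 0 < n)
    (y : Fin n → ℝ) (hy : ∀ j, y j ∈ Set.Icc (0 : ℝ) 1)
    (x : Ω → Fin n → ℝ) (hmeas : Measurable x)
    (hbin : ∀ ω j, x ω j = 0 ∨ x ω j = 1)
    (hexp : ∀ j, (∫ ω, x ω j ∂μ) = y j)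
    (hneg : ∀ S : Finset (Fin n),
      (∫ ω, ∏ j ∈ S, (1 - x ω j) ∂μ) ≤ ∏ j ∈ S, (1 - y j))
    (C : Type*) [Fintype C] (Δ : ℕ) (hΔ : 1 ≤ Δ)
    (c : C → ℝ) (hc : ∀ ℓ, 0 ≤ c ℓ)
    (b : C → ℝ) (hb : ∀ ℓ, 0 < b ℓ)
    (S : C → Finset (Fin n)) (hSne : ∀ ℓ, (S ℓ).Nonempty)
    (hScard : ∀ ℓ, (S ℓ).card ≤ Δ)
    (w : C → Fin n → ℝ) (hw : ∀ ℓ, ∀ j ∈ S ℓ, w ℓ j ∈ Set.Icc (0 : ℝ) (b ℓ)) :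
    (1 - (1 - 1 / (Δ : ℝ)) ^ Δ) * ∑ ℓ, c ℓ * min (b ℓ) (∑ j ∈ S ℓ, w ℓ j * y j)
      ≤ ∫ ω, ∑ ℓ, c ℓ * min (b ℓ) (∑ j ∈ S ℓ, w ℓ j * x ω j) ∂μ := by
  classical
  set α : ℝ := 1 - (1 - 1/(Δ:ℝ))^Δ with hα
  have hmx : ∀ j, Measurable fun ω => x ω j := fun j => (measurable_pi_apply j).comp hmeas
  have hx01 : ∀ ω j, x ω j ∈ Set.Icc (0:ℝ) 1 := by
    intro ω j; rcases hbin ω j with h|h <;> simp [h]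
  have hint : ∀ (g : Ω → ℝ), Measurable g → ∀ (Cb : ℝ), (∀ ω, |g ω| ≤ Cb) → Integrable g μ := by
    intro g hg Cb hCb
    exact ⟨hg.aestronglyMeasurable,
      HasFiniteIntegral.of_bounded (C := Cb) (ae_of_all _ fun ω => by
        simpa [Real.norm_eq_abs] using hCb ω)⟩
  have hmf : ∀ ℓ : C, Measurable fun ω => min (b ℓ) (∑ j ∈ S ℓ, w ℓ j * x ω j) := fun ℓ =>
    measurable_const.min (Finset.measurable_sum _ fun j _ => measurable_const.mul (hmx j))
  have hbd : ∀ (ℓ : C) ω, |min (b ℓ) (∑ j ∈ S ℓ, w ℓ j * x ω j)| ≤ b ℓ := by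
    intro ℓ ω
    have h0 : 0 ≤ ∑ j ∈ S ℓ, w ℓ j * x ω j :=
      Finset.sum_nonneg fun j hj => mul_nonneg (hw ℓ j hj).1 (hx01 ω j).1
    rw [abs_le]
    exact ⟨by have := le_min (hb ℓ).le h0; linarith [hb ℓ], min_le_left _ _⟩
  have hintf : ∀ ℓ : C, Integrable (fun ω => min (b ℓ) (∑ j ∈ S ℓ, w ℓ j * x ω j)) μ :=
    fun ℓ => hint _ (hmf ℓ) (b ℓ) (hbd ℓ)
  have hintprod : ∀ t : Finset (Fin n), Integrable (fun ω => ∏ j ∈ t, (1 - x ω j)) μ := by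
    intro t
    refine hint _ (Finset.measurable_prod _ fun j _ => measurable_const.sub (hmx j)) 1 ?_
    intro ω
    have := prod_Icc01 t (fun j => 1 - x ω j) (fun j hj =>
      ⟨by linarith [(hx01 ω j).2], by linarith [(hx01 ω j).1]⟩)
    rw [abs_le]; exact ⟨by linarith [this.1], this.2⟩
  -- main per-ℓ estimate
  have hmain : ∀ ℓ : C, α * min (b ℓ) (∑ j ∈ S ℓ, w ℓ j * y j)
      ≤ ∫ ω, min (b ℓ) (∑ j ∈ S ℓ, w ℓ j * x ω j) ∂μ := by
    intro ℓ
    have hb0 : (0:ℝ) < b ℓ := hb ℓ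
    set a : Fin n → ℝ := fun j => w ℓ j / b ℓ with ha
    have ha01 : ∀ j ∈ S ℓ, a j ∈ Set.Icc (0:ℝ) 1 := fun j hj =>
      ⟨div_nonneg (hw ℓ j hj).1 hb0.le, (div_le_one hb0).2 (hw ℓ j hj).2⟩
    have hba : ∀ j ∈ S ℓ, b ℓ * a j = w ℓ j := fun j hj => by
      simp only [ha]; field_simp
    -- Step 1: pointwise lower bound
    have step1 : ∀ ω, b ℓ * (1 - ∏ j ∈ S ℓ, (1 - a j * x ω j))
        ≤ min (b ℓ) (∑ j ∈ S ℓ, w ℓ j * x ω j) := by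
      intro ω
      have ht : ∀ j ∈ S ℓ, a j * x ω j ∈ Set.Icc (0:ℝ) 1 := fun j hj =>
        ⟨mul_nonneg (ha01 j hj).1 (hx01 ω j).1,
         mul_le_one₀ (ha01 j hj).2 (hx01 ω j).1 (hx01 ω j).2⟩
      have hP := prod_Icc01 (S ℓ) (fun j => 1 - a j * x ω j) (fun j hj =>
        ⟨by linarith [(ht j hj).2], by linarith [(ht j hj).1]⟩)
      refine le_min ?_ ?_
      · nlinarith [hP.1]
      · have h1 := one_sub_prod_le_sum (S ℓ) (fun j => a j * x ω j) ht
        have h2 : b ℓ * ∑ j ∈ S ℓ, a j * x ω j = ∑ j ∈ S ℓ, w ℓ j * x ω j := by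
          rw [Finset.mul_sum]
          exact Finset.sum_congr rfl fun j hj => by rw [← hba j hj]; ring
        nlinarith [h1]
    -- Step 2: expectation of the product
    have hintP : Integrable (fun ω => ∏ j ∈ S ℓ, (1 - a j * x ω j)) μ := by
      refine hint _ (Finset.measurable_prod _ fun j _ =>
        measurable_const.sub (measurable_const.mul (hmx j))) 1 ?_
      intro ω
      have ht : ∀ j ∈ S ℓ, a j * x ω j ∈ Set.Icc (0:ℝ) 1 := fun j hj =>
        ⟨mul_nonneg (ha01 j hj).1 (hx01 ω j).1,
         mul_le_one₀ (ha01 j hj).2 (hx01 ω j).1 (hx01 ω j).2⟩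
      have hP := prod_Icc01 (S ℓ) (fun j => 1 - a j * x ω j) (fun j hj =>
        ⟨by linarith [(ht j hj).2], by linarith [(ht j hj).1]⟩)
      rw [abs_le]; exact ⟨by linarith [hP.1], hP.2⟩
    have hexpand : ∀ (v : Fin n → ℝ), ∏ j ∈ S ℓ, (1 - a j * v j)
        = ∑ t ∈ (S ℓ).powerset,
            ((∏ j ∈ t, a j) * ∏ j ∈ (S ℓ) \ t, (1 - a j)) * ∏ j ∈ t, (1 - v j) := by
      intro v
      calc ∏ j ∈ S ℓ, (1 - a j * v j)
          = ∏ j ∈ S ℓ, (a j * (1 - v j) + (1 - a j)) :=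
            Finset.prod_congr rfl fun j _ => by ring
        _ = ∑ t ∈ (S ℓ).powerset, (∏ j ∈ t, a j * (1 - v j)) * ∏ j ∈ (S ℓ) \ t, (1 - a j) :=
            Finset.prod_add _ _ _
        _ = _ := Finset.sum_congr rfl fun t _ => by rw [Finset.prod_mul_distrib]; ring
    have hC0 : ∀ t ∈ (S ℓ).powerset,
        0 ≤ (∏ j ∈ t, a j) * ∏ j ∈ (S ℓ) \ t, (1 - a j) := by
      intro t htt
      have hts := Finset.mem_powerset.1 htt
      refine mul_nonneg (Finset.prod_nonneg fun j hj => (ha01 j (hts hj)).1)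
        (Finset.prod_nonneg fun j hj => ?_)
      have := (ha01 j (Finset.mem_sdiff.1 hj).1).2
      linarith
    have step2 : (∫ ω, ∏ j ∈ S ℓ, (1 - a j * x ω j) ∂μ) ≤ ∏ j ∈ S ℓ, (1 - a j * y j) := by
      have h1 : (∫ ω, ∏ j ∈ S ℓ, (1 - a j * x ω j) ∂μ)
          = ∑ t ∈ (S ℓ).powerset, ((∏ j ∈ t, a j) * ∏ j ∈ (S ℓ) \ t, (1 - a j))
              * ∫ ω, ∏ j ∈ t, (1 - x ω j) ∂μ := by
        rw [show (fun ω => ∏ j ∈ S ℓ, (1 - a j * x ω j))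
            = fun ω => ∑ t ∈ (S ℓ).powerset,
                ((∏ j ∈ t, a j) * ∏ j ∈ (S ℓ) \ t, (1 - a j)) * ∏ j ∈ t, (1 - x ω j)
            from funext fun ω => hexpand (x ω)]
        rw [integral_finset_sum _ fun t _ => (hintprod t).const_mul _]
        exact Finset.sum_congr rfl fun t _ => integral_const_mul _ _
      rw [h1, hexpand y]
      exact Finset.sum_le_sum fun t htt =>
        mul_le_mul_of_nonneg_left (hneg t) (hC0 t htt)
    -- Step 3: analytic bound at y
    have hty : ∀ j ∈ S ℓ, a j * y j ∈ Set.Icc (0:ℝ) 1 := fun j hj =>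
      ⟨mul_nonneg (ha01 j hj).1 (hy j).1,
       mul_le_one₀ (ha01 j hj).2 (hy j).1 (hy j).2⟩
    have step3 := key_analytic (S ℓ) (fun j => a j * y j) hty Δ hΔ (hScard ℓ)
    have hminy : min (b ℓ) (∑ j ∈ S ℓ, w ℓ j * y j) = b ℓ * min 1 (∑ j ∈ S ℓ, a j * y j) := by
      have h2 : b ℓ * ∑ j ∈ S ℓ, a j * y j = ∑ j ∈ S ℓ, w ℓ j * y j := by
        rw [Finset.mul_sum]
        exact Finset.sum_congr rfl fun j hj => by rw [← hba j hj]; ring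
      rcases le_total (1:ℝ) (∑ j ∈ S ℓ, a j * y j) with h | h
      · rw [min_eq_left h, mul_one, min_eq_left]
        rw [← h2]; nlinarith
      · rw [min_eq_right h, min_eq_right, h2]
        rw [← h2]; nlinarith
    -- put together
    have hI1 : (∫ ω, b ℓ * (1 - ∏ j ∈ S ℓ, (1 - a j * x ω j)) ∂μ)
        = b ℓ * (1 - ∫ ω, ∏ j ∈ S ℓ, (1 - a j * x ω j) ∂μ) := by
      rw [integral_const_mul, integral_sub (integrable_const 1) hintP, integral_const]
      simp
    calc α * min (b ℓ) (∑ j ∈ S ℓ, w ℓ j * y j)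
        = b ℓ * (α * min 1 (∑ j ∈ S ℓ, a j * y j)) := by rw [hminy]; ring
      _ ≤ b ℓ * (1 - ∏ j ∈ S ℓ, (1 - a j * y j)) :=
          mul_le_mul_of_nonneg_left step3 hb0.le
      _ ≤ b ℓ * (1 - ∫ ω, ∏ j ∈ S ℓ, (1 - a j * x ω j) ∂μ) := by nlinarith [step2]
      _ = ∫ ω, b ℓ * (1 - ∏ j ∈ S ℓ, (1 - a j * x ω j)) ∂μ := hI1.symm
      _ ≤ ∫ ω, min (b ℓ) (∑ j ∈ S ℓ, w ℓ j * x ω j) ∂μ := by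
          refine integral_mono ?_ (hintf ℓ) step1
          exact ((integrable_const (1:ℝ)).sub hintP).const_mul (b ℓ)
  -- assemble
  have hswap : (∫ ω, ∑ ℓ, c ℓ * min (b ℓ) (∑ j ∈ S ℓ, w ℓ j * x ω j) ∂μ)
      = ∑ ℓ, c ℓ * ∫ ω, min (b ℓ) (∑ j ∈ S ℓ, w ℓ j * x ω j) ∂μ := by
    rw [integral_finset_sum _ fun ℓ _ => (hintf ℓ).const_mul _]
    exact Finset.sum_congr rfl fun ℓ _ => integral_const_mul _ _
  rw [hswap, Finset.mul_sum]
  refine Finset.sum_le_sum fun ℓ _ => ?_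
  calc α * (c ℓ * min (b ℓ) (∑ j ∈ S ℓ, w ℓ j * y j))
      = c ℓ * (α * min (b ℓ) (∑ j ∈ S ℓ, w ℓ j * y j)) := by ring
    _ ≤ c ℓ * ∫ ω, min (b ℓ) (∑ j ∈ S ℓ, w ℓ j * x ω j) ∂μ :=
        mul_le_mul_of_nonneg_left (hmain ℓ) (hc ℓ)
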